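/- If U is a subword of V_i with |U| ≥ (4/M)|V_i|, where M = 24n, n ≥ 2, and V_i = h₁ h₂^{Mi+1} h₁ ⋯ h₁ h₂^{M(i+1)} h₁, then |U| > 2M(i+1) + 2, and consequently U contains a subword of the form h₁ h₂^k h₁ with Mi+1 ≤ k ≤ M(i+1). -/

import Mathlib

/-- The two-letter alphabet {h₁, h₂}, encoded as `Fin 2`. -/
def h1 : Fin 2 := 0
def h2 : Fin 2 := 1

/-- The word `V_i = h₁ h₂^{Mi+1} h₁ h₂^{Mi+2} ⋯ h₁ h₂^{M(i+1)} h₁`. -/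
def Vword (M i : ℕ) : List (Fin 2) :=
  [h1] ++ (List.range M).flatMap (fun j => List.replicate (M * i + 1 + j) h2 ++ [h1])

/-- The pattern `h₁ h₂^k h₁`. -/
def pat (k : ℕ) : List (Fin 2) := [h1] ++ List.replicate k h2 ++ [h1]

/-- Auxiliary: the word built from a list of block lengths. -/
def Wd (L : List ℕ) : List (Fin 2) :=
  [h1] ++ L.flatMap (fun a => List.replicate a h2 ++ [h1])

lemma Wd_cons (a : ℕ) (L : List ℕ) :
    Wd (a :: L) = pat a ++ L.flatMap (fun a => List.replicate a h2 ++ [h1]) := by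
  simp [Wd, pat, List.flatMap_cons]

lemma Wd_cons' (a : ℕ) (L : List ℕ) :
    Wd (a :: L) = ([h1] ++ List.replicate a h2) ++ Wd L := by
  simp [Wd, List.flatMap_cons]

lemma split_left {α} {X Y U V : List α} (h : X ++ Y = U ++ V)
    (hl : X.length ≤ U.length) : ∃ T, U = X ++ T ∧ Y = T ++ V := by
  have hp : X <+: U := by
    have h1 : X <+: U ++ V := h ▸ List.prefix_append X Y
    exact List.prefix_of_prefix_length_le h1 (List.prefix_append U V) hl
  obtain ⟨T, hT⟩ := hp
  refine ⟨T, hT.symm, ?_⟩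
  rw [← hT, List.append_assoc] at h
  exact List.append_cancel_left h

lemma helper {L : List ℕ} {Bd : ℕ} {U V' : List (Fin 2)}
    (h : Wd L = U ++ V') (hB : ∀ a ∈ L, a ≤ Bd) (hU : Bd + 2 ≤ U.length) :
    ∃ a ∈ L, ∃ D, U = pat a ++ D := by
  cases L with
  | nil =>
    exfalso
    have : U.length ≤ 1 := by
      have := congrArg List.length h
      simp [Wd] at this
      omega
    omega
  | cons a L' =>
    rw [Wd_cons] at h
    have hpl : (pat a).length ≤ U.length := by
      have := hB a (List.mem_cons_self)
      simp [pat]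
      omega
    obtain ⟨T, hT, _⟩ := split_left h hpl
    exact ⟨a, List.mem_cons_self, T, hT⟩

lemma main_lemma {Bd : ℕ} :
    ∀ (L : List ℕ) (A U V' : List (Fin 2)), Wd L = A ++ U ++ V' →
      (∀ a ∈ L, a ≤ Bd) → 2 * Bd + 2 < U.length →
      ∃ a ∈ L, ∃ C D, U = C ++ pat a ++ D := by
  intro L
  induction L with
  | nil =>
    intro A U V' h hB hU
    exfalso
    have := congrArg List.length h
    simp [Wd] at this
    omega
  | cons a L' ih =>
    intro A U V' h hB hU
    have ha : a ≤ Bd := hB a (List.mem_cons_self)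
    rcases le_or_gt A.length (a + 1) with hA | hA
    · -- A ends within the first block prefix [h1] ++ h2^a
      rw [Wd_cons'] at h
      have h' : A ++ (U ++ V') = ([h1] ++ List.replicate a h2) ++ Wd L' := by
        rw [← List.append_assoc]; exact h.symm
      obtain ⟨T, hT1, hT2⟩ := split_left h' (by simp; omega)
      -- hT1 : [h1] ++ replicate a h2 = A ++ T, hT2 : U ++ V' = T ++ Wd L'
      have hTlen : T.length ≤ a + 1 := by
        have := congrArg List.length hT1
        simp at this
        omega
      obtain ⟨T₂, hT3, hT4⟩ := split_left hT2.symm (by omega)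
      -- hT3 : U = T ++ T₂, hT4 : Wd L' = T₂ ++ V'
      have hT2len : Bd + 2 ≤ T₂.length := by
        have := congrArg List.length hT3
        simp at this
        omega
      obtain ⟨a', ha', D, hD⟩ := helper hT4 (fun x hx => hB x (List.mem_cons_of_mem a hx)) hT2len
      exact ⟨a', List.mem_cons_of_mem a ha', T, D, by rw [hT3, hD, List.append_assoc]⟩
    · -- A covers the first block prefix; recurse
      rw [Wd_cons'] at h
      have h' : ([h1] ++ List.replicate a h2) ++ Wd L' = A ++ (U ++ V') := by
        rw [← List.append_assoc]; exact h
      obtain ⟨T, hT1, hT2⟩ := split_left h' (by simp; omega)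
      -- hT1 : A = P ++ T, hT2 : Wd L' = T ++ (U ++ V')
      rw [← List.append_assoc] at hT2
      obtain ⟨a', ha', C, D, hCD⟩ :=
        ih T U V' hT2 (fun x hx => hB x (List.mem_cons_of_mem a hx)) hU
      exact ⟨a', List.mem_cons_of_mem a ha', C, D, hCD⟩

lemma Vword_eq_Wd (M i : ℕ) :
    Vword M i = Wd ((List.range M).map (fun j => M * i + 1 + j)) := by
  simp [Vword, Wd, List.flatMap_map, Function.comp]

lemma Wd_length (L : List ℕ) : (Wd L).length = 1 + L.sum + L.length := by
  induction L with
  | nil => simp [Wd]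
  | cons a L ih =>
    rw [Wd_cons']
    simp only [List.length_append] at ih ⊢
    simp [Wd] at ih ⊢
    omega

lemma sum_range_map_ge (c m : ℕ) :
    m * c ≤ (((List.range m).map (fun j => c + j)).sum) := by
  induction m with
  | zero => simp
  | succ m ih =>
    rw [List.range_succ, List.map_append, List.sum_append]
    simp only [List.map_cons, List.map_nil, List.sum_cons, List.sum_nil]
    have : (m + 1) * c = m * c + c := by ring
    omega

theorem stmt_4 (n : ℕ) (hn : 2 ≤ n) (M : ℕ) (hM : M = 24 * n) (i : ℕ) (hi : 1 ≤ i)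
    (U A B : List (Fin 2)) (hsub : Vword M i = A ++ U ++ B)
    (hlen : 4 / (M : ℚ) * ((Vword M i).length : ℚ) ≤ (U.length : ℚ)) :
    2 * M * (i + 1) + 2 < U.length ∧
    ∃ k : ℕ, M * i + 1 ≤ k ∧ k ≤ M * (i + 1) ∧
      ∃ C D : List (Fin 2), U = C ++ pat k ++ D := by
  have hMpos : 0 < M := by omega
  have hMQ : (0 : ℚ) < (M : ℚ) := by exact_mod_cast hMpos
  rw [div_mul_eq_mul_div, div_le_iff₀ hMQ] at hlen
  have hlen' : 4 * (Vword M i).length ≤ U.length * M := by exact_mod_cast hlen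
  set L : List ℕ := (List.range M).map (fun j => M * i + 1 + j) with hL
  have hVW : Vword M i = Wd L := Vword_eq_Wd M i
  have hVlen : (Vword M i).length = 1 + L.sum + L.length := by rw [hVW, Wd_length]
  have hLlen : L.length = M := by simp [hL]
  have hLsum : M * (M * i + 1) ≤ L.sum := sum_range_map_ge (M * i + 1) M
  -- get the length bound
  have hUlen : 2 * M * (i + 1) + 2 < U.length := by
    obtain ⟨j, rfl⟩ : ∃ j, i = 1 + j := ⟨i - 1, by omega⟩
    have h1 : 4 * (1 + L.sum + M) ≤ U.length * M := by
      rw [hVlen, hLlen] at hlen'; exact hlen'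
    have key : M * (2 * M * (1 + j + 1) + 2) < U.length * M := by nlinarith [hLsum, h1]
    have := Nat.lt_of_mul_lt_mul_left (a := M) (by rw [mul_comm U.length M] at key; exact key)
    exact this
  refine ⟨hUlen, ?_⟩
  have hB : ∀ a ∈ L, a ≤ M * (i + 1) := by
    intro a ha
    simp only [hL, List.mem_map, List.mem_range] at ha
    obtain ⟨j, hj, rfl⟩ := ha
    have : M * (i + 1) = M * i + M := by ring
    omega
  have hmain := main_lemma L A U B (by rw [← hVW]; exact hsub) hB
    (by have : 2 * (M * (i + 1)) = 2 * M * (i + 1) := by ring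
        omega)
  obtain ⟨a, haL, C, D, hCD⟩ := hmain
  refine ⟨a, ?_, hB a haL, C, D, hCD⟩
  simp only [hL, List.mem_map, List.mem_range] at haL
  obtain ⟨j, _, rfl⟩ := haL
  omega
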